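/- arXiv:1804.11000 — 5 statements merged into one kernel-verified Lean document; each statement's English description precedes it below -/
import Mathlib

section
/- Let m be a positive integer and let ℓ ∈ {m-1, m}. Define p_{m,ℓ}(z) = sqrt(z) * ((1+sqrt(z))^{m+ℓ+1} + (1-sqrt(z))^{m+ℓ+1}) / ((1+sqrt(z))^{m+ℓ+1} - (1-sqrt(z))^{m+ℓ+1}). Then p_{m,ℓ} is a rational function of z of type (m, ℓ), i.e., a ratio of a polynomial of degree m and a polynomial of degree ℓ in z. -/
set_option maxRecDepth 8000

open Finset Polynomial

lemma sum_split (f : ℕ → ℝ) : ∀ n : ℕ, ∑ k ∈ Finset.range n, f k =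
    (∑ j ∈ Finset.range ((n+1)/2), f (2*j)) + ∑ j ∈ Finset.range (n/2), f (2*j+1) := by
  intro n
  induction n with
  | zero => simp
  | succ n ih =>
    rcases Nat.even_or_odd n with ⟨t, ht⟩ | ⟨t, ht⟩
    · subst ht
      rw [Finset.sum_range_succ, ih,
        show (t+t+1+1)/2 = t+1 by omega, show (t+t+1)/2 = t by omega,
        show (t+t)/2 = t by omega,
        Finset.sum_range_succ (fun j => f (2*j)) t,
        show 2 * t = t + t by ring]
      ring
    · subst ht
      rw [Finset.sum_range_succ, ih,
        show (2*t+1+1+1)/2 = t+1 by omega, show (2*t+1+1)/2 = t+1 by omega,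
        show (2*t+1)/2 = t by omega,
        Finset.sum_range_succ (fun j => f (2*j+1)) t]
      ring

lemma even_part (s : ℝ) (n : ℕ) :
    (1+s)^n + (1-s)^n = 2 * ∑ j ∈ Finset.range ((n+2)/2), (n.choose (2*j) : ℝ) * s^(2*j) := by
  have h1 : (1+s)^n = ∑ k ∈ Finset.range (n+1), s^k * (n.choose k : ℝ) := by
    have := add_pow s 1 n
    simpa [add_comm] using this
  have h2 : (1-s)^n = ∑ k ∈ Finset.range (n+1), (-1)^k * s^k * (n.choose k : ℝ) := by
    rw [show (1:ℝ) - s = -s + 1 by ring, add_pow (-s) 1 n]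
    exact Finset.sum_congr rfl fun k _ => by rw [one_pow, mul_one, neg_pow]
  rw [h1, h2, ← Finset.sum_add_distrib]
  rw [sum_split (fun k => s^k * (n.choose k : ℝ) + (-1)^k * s^k * (n.choose k : ℝ)) (n+1)]
  rw [show (n+1+1)/2 = (n+2)/2 by omega]
  simp [pow_add, pow_mul, Finset.mul_sum]
  apply Finset.sum_congr rfl
  intro j _
  ring

lemma odd_part (s : ℝ) (n : ℕ) :
    (1+s)^n - (1-s)^n = 2 * ∑ j ∈ Finset.range ((n+1)/2), (n.choose (2*j+1) : ℝ) * s^(2*j+1) := by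
  have h1 : (1+s)^n = ∑ k ∈ Finset.range (n+1), s^k * (n.choose k : ℝ) := by
    have := add_pow s 1 n
    simpa [add_comm] using this
  have h2 : (1-s)^n = ∑ k ∈ Finset.range (n+1), (-1)^k * s^k * (n.choose k : ℝ) := by
    rw [show (1:ℝ) - s = -s + 1 by ring, add_pow (-s) 1 n]
    exact Finset.sum_congr rfl fun k _ => by rw [one_pow, mul_one, neg_pow]
  rw [h1, h2, ← Finset.sum_sub_distrib]
  rw [sum_split (fun k => s^k * (n.choose k : ℝ) - (-1)^k * s^k * (n.choose k : ℝ)) (n+1)]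
  simp [pow_add, pow_mul, Finset.mul_sum]
  apply Finset.sum_congr rfl
  intro j _
  ring

lemma natDeg_aux (a : ℕ → ℝ) (d : ℕ) (h : a d ≠ 0) :
    (∑ j ∈ Finset.range (d+1), Polynomial.C (a j) * Polynomial.X ^ j).natDegree = d := by
  apply le_antisymm
  · apply Polynomial.natDegree_sum_le_of_forall_le
    intro j hj
    exact (Polynomial.natDegree_C_mul_X_pow_le _ _).trans (by
      have := Finset.mem_range.mp hj; omega)
  · apply Polynomial.le_natDegree_of_ne_zero
    rw [Polynomial.finset_sum_coeff]
    simp only [Polynomial.coeff_C_mul, Polynomial.coeff_X_pow]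
    rw [Finset.sum_eq_single d]
    · simpa using h
    · intro b _ hb; simp [Ne.symm hb]
    · intro hd; exact absurd (Finset.self_mem_range_succ d) hd

/-- The type `(m, ℓ)` Padé approximant of `√z` at `z = 1`, given by the explicit
formula, is a rational function of `z` of type `(m, ℓ)`. -/
theorem pade_sqrt_is_rational_of_type (m ℓ : ℕ) (hm : 0 < m) (hℓ : ℓ = m - 1 ∨ ℓ = m) :
    ∃ p q : Polynomial ℝ, p.natDegree = m ∧ q.natDegree = ℓ ∧
      ∀ z : ℝ, 0 < z →
        p.eval z / q.eval z =
          Real.sqrt z *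
              ((1 + Real.sqrt z) ^ (m + ℓ + 1) + (1 - Real.sqrt z) ^ (m + ℓ + 1)) /
            ((1 + Real.sqrt z) ^ (m + ℓ + 1) - (1 - Real.sqrt z) ^ (m + ℓ + 1)) := by
  have hlm : 2 * m ≤ m + ℓ + 1 ∧ 2 * ℓ + 1 ≤ m + ℓ + 1 := by
    rcases hℓ with h | h <;> omega
  refine ⟨∑ j ∈ Finset.range (m+1),
      Polynomial.C (((m+ℓ+1).choose (2*j) : ℝ)) * Polynomial.X ^ j,
    ∑ j ∈ Finset.range (ℓ+1),
      Polynomial.C (((m+ℓ+1).choose (2*j+1) : ℝ)) * Polynomial.X ^ j, ?_, ?_, ?_⟩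
  · exact natDeg_aux _ m
      (Nat.cast_ne_zero.mpr (Nat.choose_pos hlm.1).ne')
  · exact natDeg_aux _ ℓ
      (Nat.cast_ne_zero.mpr (Nat.choose_pos hlm.2).ne')
  · intro z hz
    set s := Real.sqrt z with hsdef
    have hs : 0 < s := Real.sqrt_pos.mpr hz
    have hs2 : s ^ 2 = z := Real.sq_sqrt hz.le
    have hE := even_part s (m+ℓ+1)
    have hO := odd_part s (m+ℓ+1)
    have e1 : (m+ℓ+1+2)/2 = m+1 := by rcases hℓ with h | h <;> omega
    have e2 : (m+ℓ+1+1)/2 = ℓ+1 := by rcases hℓ with h | h <;> omega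
    rw [e1] at hE
    rw [e2] at hO
    have hp : Polynomial.eval z (∑ j ∈ Finset.range (m+1),
        Polynomial.C (((m+ℓ+1).choose (2*j) : ℝ)) * Polynomial.X ^ j)
        = ∑ j ∈ Finset.range (m+1), (((m+ℓ+1).choose (2*j) : ℝ)) * s^(2*j) := by
      rw [Polynomial.eval_finset_sum]
      refine Finset.sum_congr rfl fun j _ => ?_
      rw [Polynomial.eval_mul, Polynomial.eval_C, Polynomial.eval_pow, Polynomial.eval_X,
        ← hs2, ← pow_mul]
    have hq : s * Polynomial.eval z (∑ j ∈ Finset.range (ℓ+1),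
        Polynomial.C (((m+ℓ+1).choose (2*j+1) : ℝ)) * Polynomial.X ^ j)
        = ∑ j ∈ Finset.range (ℓ+1), (((m+ℓ+1).choose (2*j+1) : ℝ)) * s^(2*j+1) := by
      rw [Polynomial.eval_finset_sum, Finset.mul_sum]
      refine Finset.sum_congr rfl fun j _ => ?_
      rw [Polynomial.eval_mul, Polynomial.eval_C, Polynomial.eval_pow, Polynomial.eval_X,
        ← hs2, ← pow_mul]
      ring
    rw [hE, ← hp, hO, ← hq,
      show s * (2 * Polynomial.eval z (∑ j ∈ Finset.range (m+1),
        Polynomial.C (((m+ℓ+1).choose (2*j) : ℝ)) * Polynomial.X ^ j))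
        = (2 * s) * Polynomial.eval z (∑ j ∈ Finset.range (m+1),
        Polynomial.C (((m+ℓ+1).choose (2*j) : ℝ)) * Polynomial.X ^ j) by ring,
      show 2 * (s * Polynomial.eval z (∑ j ∈ Finset.range (ℓ+1),
        Polynomial.C (((m+ℓ+1).choose (2*j+1) : ℝ)) * Polynomial.X ^ j))
        = (2 * s) * Polynomial.eval z (∑ j ∈ Finset.range (ℓ+1),
        Polynomial.C (((m+ℓ+1).choose (2*j+1) : ℝ)) * Polynomial.X ^ j) by ring,
      mul_div_mul_left _ _ (by positivity)]
end

section
/- With p_{m,ℓ}(z) = sqrt(z) * ((1+sqrt(z))^{m+ℓ+1} + (1-sqrt(z))^{m+ℓ+1}) / ((1+sqrt(z))^{m+ℓ+1} - (1-sqrt(z))^{m+ℓ+1}) and ℓ ∈ {m-1, m}, the zeros of p_{m,ℓ}(z) as a rational function of z are exactly the m numbers z = -tan^2((2j-1)π/(2(m+ℓ+1))) for j = 1, ..., m. -/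
open Polynomial

noncomputable def PQ : ℕ → Polynomial ℝ × Polynomial ℝ
  | 0 => (1, 0)
  | n + 1 => ((PQ n).1 + X * (PQ n).2, (PQ n).1 + (PQ n).2)

theorem PQ_key {K : Type*} [CommRing K] [Algebra ℝ K] (n : ℕ) (w : K) :
    2 * aeval (w ^ 2) (PQ n).1 = (1 + w) ^ n + (1 - w) ^ n ∧
    2 * w * aeval (w ^ 2) (PQ n).2 = (1 + w) ^ n - (1 - w) ^ n := by
  induction n with
  | zero => norm_num [PQ]
  | succ n ih =>
    obtain ⟨h1, h2⟩ := ih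
    simp only [PQ, map_add, map_mul, aeval_X, map_one]
    set a := aeval (w ^ 2) (PQ n).1 with ha
    set b := aeval (w ^ 2) (PQ n).2 with hb
    constructor
    · rw [pow_succ, pow_succ]
      linear_combination h1 + w * h2
    · rw [pow_succ, pow_succ]
      linear_combination w * h1 + h2

theorem PQ_coeff (n : ℕ) (i : ℕ) :
    (PQ n).1.coeff i = n.choose (2 * i) ∧ (PQ n).2.coeff i = n.choose (2 * i + 1) := by
  induction n generalizing i with
  | zero =>
    rcases i with _ | i <;>
      simp [PQ, coeff_one, Nat.choose_eq_zero_of_lt, Nat.succ_ne_zero]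
  | succ n ih =>
    constructor
    · rcases i with _ | i
      · simp [PQ, (ih 0).1, coeff_X_mul_zero]
      · have hc : (X * (PQ n).2).coeff (i + 1) = (PQ n).2.coeff i := coeff_X_mul _ _
        simp only [PQ, coeff_add, hc, (ih (i+1)).1, (ih i).2]
        rw [show 2 * (i+1) = (2*i+1) + 1 from by ring, Nat.choose_succ_succ]
        push_cast; ring
    · simp only [PQ, coeff_add, (ih i).1, (ih i).2]
      rw [Nat.choose_succ_succ]
      push_cast; ring

theorem P_natDegree (n : ℕ) : (PQ n).1.natDegree = n / 2 := by
  apply le_antisymm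
  · rw [natDegree_le_iff_coeff_eq_zero]
    intro i hi
    rw [(PQ_coeff n i).1, Nat.choose_eq_zero_of_lt (by omega), Nat.cast_zero]
  · apply le_natDegree_of_ne_zero
    rw [(PQ_coeff n _).1]
    exact_mod_cast (Nat.choose_pos (by omega)).ne'

theorem Q_natDegree (n : ℕ) (hn : 1 ≤ n) : (PQ n).2.natDegree = (n - 1) / 2 := by
  apply le_antisymm
  · rw [natDegree_le_iff_coeff_eq_zero]
    intro i hi
    rw [(PQ_coeff n i).2, Nat.choose_eq_zero_of_lt (by omega), Nat.cast_zero]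
  · apply le_natDegree_of_ne_zero
    rw [(PQ_coeff n _).2]
    exact_mod_cast (Nat.choose_pos (by omega)).ne'

theorem PQ_eval_one (n : ℕ) : 0 < (PQ n).1.eval 1 ∧ 0 ≤ (PQ n).2.eval 1 := by
  induction n with
  | zero => norm_num [PQ]
  | succ n ih =>
    obtain ⟨h1, h2⟩ := ih
    constructor <;> simp [PQ] <;> nlinarith

theorem PQ_sq (n : ℕ) :
    (PQ n).1 ^ 2 - X * (PQ n).2 ^ 2 = (1 - X) ^ n := by
  have h : ∀ y : ℝ, 0 ≤ y →
      ((PQ n).1 ^ 2 - X * (PQ n).2 ^ 2 - (1 - X) ^ n).eval y = 0 := by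
    intro y hy
    obtain ⟨h1, h2⟩ := PQ_key (K := ℝ) n (Real.sqrt y)
    rw [Real.sq_sqrt hy] at h1 h2
    simp only [coe_aeval_eq_eval] at h1 h2
    simp only [eval_sub, eval_mul, eval_pow, eval_X, eval_one, eval_sub, eval_one]
    have hs : Real.sqrt y ^ 2 = y := Real.sq_sqrt hy
    have hprod : (1 + Real.sqrt y) ^ n * (1 - Real.sqrt y) ^ n = (1 - y) ^ n := by
      rw [← mul_pow]; congr 1; linear_combination -hs
    linear_combination ((2 * eval y (PQ n).1 + (1 + Real.sqrt y) ^ n + (1 - Real.sqrt y) ^ n) / 4) * h1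
      - ((2 * Real.sqrt y * eval y (PQ n).2 + (1 + Real.sqrt y) ^ n - (1 - Real.sqrt y) ^ n) / 4) * h2
      + hprod + (eval y (PQ n).2) ^ 2 * hs
  have hz : ((PQ n).1 ^ 2 - X * (PQ n).2 ^ 2 - (1 - X) ^ n) = 0 := by
    apply eq_zero_of_infinite_isRoot
    exact (Set.Ici_infinite 0).mono (fun y hy => h y hy)
  exact sub_eq_zero.mp hz

theorem P_root (n : ℕ) (θ : ℝ) (hc : Real.cos θ ≠ 0) (h0 : Real.cos (n * θ) = 0) :
    (PQ n).1.eval (-(Real.tan θ) ^ 2) = 0 := by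
  set t : ℝ := Real.tan θ with ht
  have hcθ : Complex.cos θ ≠ 0 := by
    rw [← Complex.ofReal_cos]; exact_mod_cast hc
  have htc : (t : ℂ) = Complex.sin θ / Complex.cos θ := by
    rw [ht, Real.tan_eq_sin_div_cos]; push_cast; rfl
  have e1 : (Real.cos θ : ℂ) * (1 + Complex.I * t) = Complex.exp (θ * Complex.I) := by
    rw [Complex.exp_mul_I, htc, Complex.ofReal_cos]
    field_simp
  have e2 : (Real.cos θ : ℂ) * (1 - Complex.I * t) = Complex.exp (-θ * Complex.I) := by
    rw [Complex.exp_mul_I, htc, Complex.ofReal_cos, Complex.cos_neg, Complex.sin_neg]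
    field_simp
    ring
  have key := (PQ_key (K := ℂ) n (Complex.I * t)).1
  have hsq : ((Complex.I * t) ^ 2) = ((-(t ^ 2) : ℝ) : ℂ) := by
    push_cast; rw [mul_pow, Complex.I_sq]; ring
  rw [hsq, show ((-(t^2):ℝ):ℂ) = algebraMap ℝ ℂ (-(t^2)) from rfl,
    aeval_algebraMap_apply_eq_algebraMap_eval] at key
  have hmul : (Real.cos θ : ℂ) ^ n * (2 * algebraMap ℝ ℂ ((PQ n).1.eval (-(t ^ 2)))) =
      Complex.exp (θ * Complex.I) ^ n + Complex.exp (-θ * Complex.I) ^ n := by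
    rw [key, ← e1, ← e2, mul_pow, mul_pow]; ring
  have hcosn : Complex.exp (θ * Complex.I) ^ n + Complex.exp (-θ * Complex.I) ^ n = 0 := by
    rw [← Complex.exp_nat_mul, ← Complex.exp_nat_mul]
    have hz : Complex.cos (((n : ℝ) * θ : ℝ) : ℂ) = 0 := by
      rw [← Complex.ofReal_cos]
      exact_mod_cast h0
    rw [Complex.cos] at hz
    rw [show (n:ℂ) * (↑θ * Complex.I) = (((n : ℝ) * θ : ℝ) : ℂ) * Complex.I by push_cast; ring,
      show (n:ℂ) * (-↑θ * Complex.I) = -(((n : ℝ) * θ : ℝ) : ℂ) * Complex.I by push_cast; ring]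
    linear_combination 2 * hz
  rw [hcosn] at hmul
  rcases mul_eq_zero.mp hmul with h | h
  · exact absurd h (pow_ne_zero _ (by exact_mod_cast hc))
  · have h' : algebraMap ℝ ℂ ((PQ n).1.eval (-(t ^ 2))) = 0 := by
      linear_combination h / 2
    rw [Complex.coe_algebraMap] at h'
    exact_mod_cast h'

theorem PQ_coprime (n : ℕ) : IsCoprime (PQ n).1 (PQ n).2 := by
  have hnd : ¬ (X - C (1:ℝ)) ∣ (PQ n).1 := by
    rw [dvd_iff_isRoot]
    intro hr
    have := (PQ_eval_one n).1
    rw [IsRoot] at hr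
    linarith
  have hcop : IsCoprime (PQ n).1 ((X - C (1:ℝ)) ^ n) :=
    Irreducible.coprime_pow_of_not_dvd n (irreducible_X_sub_C 1) hnd
  obtain ⟨a, b, hab⟩ := hcop
  have hC1 : (C (1:ℝ)) = 1 := map_one C
  rw [hC1] at hab
  have hsq := PQ_sq n
  have hneg : ((X:ℝ[X]) - 1) ^ n = (-1) ^ n * (1 - X) ^ n := by
    rw [← neg_sub (1:ℝ[X]) X, neg_pow]
  refine ⟨a + (-1)^n * b * (PQ n).1, -((-1)^n * b * X * (PQ n).2), ?_⟩
  linear_combination hab + ((-1:ℝ[X])^n * b) * hsq - b * hneg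



/-- The zeros of the type `(m, ℓ)` Padé approximant of `√z` at `z = 1`, as a rational
function of `z`, are exactly the `m` numbers `-tan²((2j-1)π/(2(m+ℓ+1)))`, `j = 1, …, m`. -/
theorem pade_sqrt_zeros (m ℓ : ℕ) (hm : 0 < m) (hℓ : ℓ = m - 1 ∨ ℓ = m) :
    ∃ p q : Polynomial ℝ, p.natDegree = m ∧ q.natDegree = ℓ ∧ IsCoprime p q ∧
      (∀ z : ℝ, 0 < z →
        p.eval z / q.eval z =
          Real.sqrt z *
              ((1 + Real.sqrt z) ^ (m + ℓ + 1) + (1 - Real.sqrt z) ^ (m + ℓ + 1)) /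
            ((1 + Real.sqrt z) ^ (m + ℓ + 1) - (1 - Real.sqrt z) ^ (m + ℓ + 1))) ∧
      (∀ x : ℝ, p.IsRoot x ↔ ∃ j ∈ Finset.Icc 1 m,
        x = -(Real.tan ((2 * (j : ℝ) - 1) * Real.pi / (2 * ((m : ℝ) + ℓ + 1)))) ^ 2) := by
  set n := m + ℓ + 1 with hn
  refine ⟨(PQ n).1, (PQ n).2, ?_, ?_, PQ_coprime n, ?_, ?_⟩
  · rw [P_natDegree]; omega
  · rw [Q_natDegree n (by omega)]; omega
  · intro z hz
    obtain ⟨h1, h2⟩ := PQ_key (K := ℝ) n (Real.sqrt z)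
    rw [Real.sq_sqrt hz.le] at h1 h2
    simp only [coe_aeval_eq_eval] at h1 h2
    rw [← h1, ← h2]
    have hs : Real.sqrt z ≠ 0 := (Real.sqrt_pos.mpr hz).ne'
    rcases eq_or_ne ((PQ n).2.eval z) 0 with hq | hq
    · rw [hq]; simp
    · field_simp
  · -- root characterization
    have hnm : 2 * m ≤ n := by omega
    set θ : ℕ → ℝ := fun j => (2 * (j:ℝ) - 1) * Real.pi / (2 * (n:ℝ)) with hθ
    have hnpos : (0:ℝ) < (n:ℝ) := by positivity
    have hθmem : ∀ j ∈ Finset.Icc 1 m, 0 < θ j ∧ θ j < Real.pi / 2 := by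
      intro j hj
      rw [Finset.mem_Icc] at hj
      have h1 : (1:ℝ) ≤ (j:ℝ) := by exact_mod_cast hj.1
      have h2 : (j:ℝ) ≤ (m:ℝ) := by exact_mod_cast hj.2
      have hnr : 2 * (m:ℝ) ≤ (n:ℝ) := by exact_mod_cast hnm
      constructor
      · apply div_pos _ (by positivity)
        have := Real.pi_pos
        nlinarith
      · rw [div_lt_iff₀ (by positivity)]
        have := Real.pi_pos
        nlinarith
    have hroot : ∀ j ∈ Finset.Icc 1 m, (PQ n).1.IsRoot (-(Real.tan (θ j)) ^ 2) := by
      intro j hj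
      obtain ⟨hp, hl⟩ := hθmem j hj
      apply P_root
      · exact (Real.cos_pos_of_mem_Ioo ⟨by linarith [Real.pi_pos], hl⟩).ne'
      · rw [Real.cos_eq_zero_iff]
        rw [Finset.mem_Icc] at hj
        refine ⟨(j:ℤ) - 1, ?_⟩
        rw [hθ]
        have : (n:ℝ) ≠ 0 := hnpos.ne'
        field_simp
        push_cast
        ring
    have hinj : Set.InjOn (fun j => -(Real.tan (θ j)) ^ 2) (Finset.Icc 1 m) := by
      have hmono : ∀ j ∈ Finset.Icc 1 m, ∀ k ∈ Finset.Icc 1 m, j < k →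
          -(Real.tan (θ k)) ^ 2 < -(Real.tan (θ j)) ^ 2 := by
        intro j hj k hk hjk
        obtain ⟨hpj, hlj⟩ := hθmem j hj
        obtain ⟨hpk, hlk⟩ := hθmem k hk
        have hθlt : θ j < θ k := by
          have hjk' : (j:ℝ) < (k:ℝ) := by exact_mod_cast hjk
          have hpi := Real.pi_pos
          rw [hθ]
          simp only
          rw [div_lt_div_iff₀ (by positivity) (by positivity)]
          nlinarith [mul_pos (mul_pos (sub_pos.mpr hjk') hpi) hnpos]
        have htj : 0 < Real.tan (θ j) := Real.tan_pos_of_pos_of_lt_pi_div_two hpj hlj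
        have htlt : Real.tan (θ j) < Real.tan (θ k) :=
          Real.tan_lt_tan_of_lt_of_lt_pi_div_two (by linarith [Real.pi_pos]) hlk hθlt
        nlinarith
      intro j hj k hk he
      simp only at he
      rcases lt_trichotomy j k with h | h | h
      · exact absurd he (by have := hmono j (by exact_mod_cast hj) k (by exact_mod_cast hk) h; linarith)
      · exact h
      · exact absurd he (by have := hmono k (by exact_mod_cast hk) j (by exact_mod_cast hj) h; linarith)
    have hP0 : (PQ n).1 ≠ 0 := by
      intro h
      have := (PQ_eval_one n).1
      rw [h] at this
      simp at this
    have hcard : ((PQ n).1.roots).card ≤ m := by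
      have := (PQ n).1.card_roots' 
      rw [P_natDegree] at this
      omega
    set S := (Finset.Icc 1 m).image (fun j => -(Real.tan (θ j)) ^ 2) with hS
    have hsub : S ⊆ (PQ n).1.roots.toFinset := by
      intro x hx
      rw [hS, Finset.mem_image] at hx
      obtain ⟨j, hj, rfl⟩ := hx
      rw [Multiset.mem_toFinset, mem_roots hP0]
      exact hroot j hj
    have hScard : S.card = m := by
      rw [hS, Finset.card_image_of_injOn hinj, Nat.card_Icc]
      omega
    have hSeq : S = (PQ n).1.roots.toFinset := by
      apply Finset.eq_of_subset_of_card_le hsub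
      calc (PQ n).1.roots.toFinset.card ≤ (PQ n).1.roots.card := Multiset.toFinset_card_le _
        _ ≤ m := hcard
        _ = S.card := hScard.symm
    intro x
    constructor
    · intro hx
      have : x ∈ (PQ n).1.roots.toFinset := by
        rw [Multiset.mem_toFinset, mem_roots hP0]; exact hx
      rw [← hSeq, hS, Finset.mem_image] at this
      obtain ⟨j, hj, hje⟩ := this
      refine ⟨j, hj, ?_⟩
      rw [← hje, hθ]
      push_cast [hn]
      norm_num
    · rintro ⟨j, hj, rfl⟩
      have := hroot j hj
      convert this using 3
      rw [hθ]
      push_cast [hn]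
      norm_num
end

section
/- With p_{m,ℓ}(z) = sqrt(z) * ((1+sqrt(z))^{m+ℓ+1} + (1-sqrt(z))^{m+ℓ+1}) / ((1+sqrt(z))^{m+ℓ+1} - (1-sqrt(z))^{m+ℓ+1}) and ℓ ∈ {m-1, m}, the poles of p_{m,ℓ}(z) as a rational function of z are exactly the ℓ numbers z = -tan^2(jπ/(m+ℓ+1)) for j = 1, ..., ℓ. -/
open Finset Polynomial

lemma sum_even_helper {R : Type*} [CommRing R] (n : ℕ) (f : ℕ → R)
    (hf : ∀ k, n < k → f k = 0) :
    ∑ k ∈ (range (n + 1)).filter (fun k => Even k), f k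
      = ∑ j ∈ range (n + 1), f (2 * j) := by
  rw [show ∑ j ∈ range (n + 1), f (2 * j) = ∑ k ∈ (range (n + 1)).image (2 * ·), f k by
    rw [Finset.sum_image]; intro a _ b _ h; have h' : 2 * a = 2 * b := h; omega]
  apply Finset.sum_subset
  · intro k hk
    simp only [mem_filter, mem_range] at hk
    obtain ⟨j, hj⟩ := hk.2
    simp only [Finset.mem_image, mem_range]
    exact ⟨j, by omega, by omega⟩
  · intro k hk hk'
    simp only [Finset.mem_image, mem_range] at hk
    simp only [mem_filter, mem_range] at hk'
    apply hf
    obtain ⟨j, hj, rfl⟩ := hk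
    by_contra h
    exact hk' ⟨by omega, ⟨j, by omega⟩⟩

lemma sum_odd_helper {R : Type*} [CommRing R] (n : ℕ) (f : ℕ → R)
    (hf : ∀ k, n < k → f k = 0) :
    ∑ k ∈ (range (n + 1)).filter (fun k => ¬ Even k), f k
      = ∑ j ∈ range (n + 1), f (2 * j + 1) := by
  rw [show ∑ j ∈ range (n + 1), f (2 * j + 1) = ∑ k ∈ (range (n + 1)).image (2 * · + 1), f k by
    rw [Finset.sum_image]; intro a _ b _ h; have h' : 2 * a + 1 = 2 * b + 1 := h; omega]
  apply Finset.sum_subset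
  · intro k hk
    simp only [mem_filter, mem_range, Nat.not_even_iff_odd] at hk
    obtain ⟨j, hj⟩ := hk.2
    simp only [Finset.mem_image, mem_range]
    exact ⟨j, by omega, by omega⟩
  · intro k hk hk'
    simp only [Finset.mem_image, mem_range] at hk
    simp only [mem_filter, mem_range, Nat.not_even_iff_odd] at hk'
    apply hf
    obtain ⟨j, hj, rfl⟩ := hk
    by_contra h
    exact hk' ⟨by omega, ⟨j, by omega⟩⟩

lemma binom_expand {R : Type*} [CommRing R] (n : ℕ) (s : R) :
    (1 + s) ^ n = ∑ k ∈ range (n + 1), (n.choose k : R) * s ^ k ∧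
    (1 - s) ^ n = ∑ k ∈ range (n + 1), (-1 : R) ^ k * ((n.choose k : R) * s ^ k) := by
  constructor
  · rw [add_comm, add_pow]
    refine Finset.sum_congr rfl fun k _ => ?_
    ring
  · rw [sub_eq_add_neg, add_comm, add_pow]
    refine Finset.sum_congr rfl fun k _ => ?_
    rw [neg_pow]
    ring

lemma pade_add {R : Type*} [CommRing R] (n : ℕ) (s : R) :
    (1 + s) ^ n + (1 - s) ^ n
      = 2 * ∑ j ∈ range (n + 1), (n.choose (2 * j) : R) * s ^ (2 * j) := by
  obtain ⟨h1, h2⟩ := binom_expand n s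
  rw [h1, h2, ← Finset.sum_add_distrib]
  have key : ∀ k ∈ range (n + 1), (n.choose k : R) * s ^ k + (-1 : R) ^ k * ((n.choose k : R) * s ^ k)
      = if Even k then 2 * ((n.choose k : R) * s ^ k) else 0 := by
    intro k _
    by_cases hk : Even k
    · rw [if_pos hk, hk.neg_one_pow]; ring
    · rw [if_neg hk, (Nat.not_even_iff_odd.1 hk).neg_one_pow]; ring
  rw [Finset.sum_congr rfl key, Finset.sum_ite, Finset.sum_const_zero, add_zero,
    Finset.mul_sum]
  rw [← Finset.mul_sum, sum_even_helper n (fun k => (n.choose k : R) * s ^ k)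
    (fun k hk => by simp [Nat.choose_eq_zero_of_lt hk]), Finset.mul_sum]

lemma pade_sub {R : Type*} [CommRing R] (n : ℕ) (s : R) :
    (1 + s) ^ n - (1 - s) ^ n
      = 2 * s * ∑ j ∈ range (n + 1), (n.choose (2 * j + 1) : R) * (s ^ 2) ^ j := by
  obtain ⟨h1, h2⟩ := binom_expand n s
  rw [h1, h2, ← Finset.sum_sub_distrib]
  have key : ∀ k ∈ range (n + 1), (n.choose k : R) * s ^ k - (-1 : R) ^ k * ((n.choose k : R) * s ^ k)
      = if Even k then 0 else 2 * ((n.choose k : R) * s ^ k) := by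
    intro k _
    by_cases hk : Even k
    · rw [if_pos hk, hk.neg_one_pow]; ring
    · rw [if_neg hk, (Nat.not_even_iff_odd.1 hk).neg_one_pow]; ring
  rw [Finset.sum_congr rfl key, Finset.sum_ite, Finset.sum_const_zero, zero_add]
  rw [← Finset.mul_sum, sum_odd_helper n (fun k => (n.choose k : R) * s ^ k)
    (fun k hk => by simp [Nat.choose_eq_zero_of_lt hk])]
  rw [Finset.mul_sum, Finset.mul_sum]
  refine Finset.sum_congr rfl fun j _ => ?_
  rw [← pow_mul]
  ring

noncomputable def padeP (n m : ℕ) : Polynomial ℝ :=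
  ∑ k ∈ range (m + 1), C ((n.choose (2 * k)) : ℝ) * X ^ k

noncomputable def padeQ (n ℓ : ℕ) : Polynomial ℝ :=
  ∑ k ∈ range (ℓ + 1), C ((n.choose (2 * k + 1)) : ℝ) * X ^ k

lemma padeP_eval (n m : ℕ) (x : ℝ) :
    (padeP n m).eval x = ∑ k ∈ range (m + 1), (n.choose (2 * k) : ℝ) * x ^ k := by
  simp [padeP, eval_finset_sum]

lemma padeQ_eval (n ℓ : ℕ) (x : ℝ) :
    (padeQ n ℓ).eval x = ∑ k ∈ range (ℓ + 1), (n.choose (2 * k + 1) : ℝ) * x ^ k := by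
  simp [padeQ, eval_finset_sum]

lemma padeP_aeval (n m : ℕ) (x : ℂ) :
    Polynomial.aeval x (padeP n m) = ∑ k ∈ range (m + 1), (n.choose (2 * k) : ℂ) * x ^ k := by
  simp [padeP]

lemma padeQ_aeval (n ℓ : ℕ) (x : ℂ) :
    Polynomial.aeval x (padeQ n ℓ) = ∑ k ∈ range (ℓ + 1), (n.choose (2 * k + 1) : ℂ) * x ^ k := by
  simp [padeQ]

lemma padeP_natDegree (n m : ℕ) (h : 2 * m ≤ n) : (padeP n m).natDegree = m := by
  apply le_antisymm
  · apply Polynomial.natDegree_sum_le_of_forall_le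
    intro k hk
    apply (Polynomial.natDegree_C_mul_le _ _).trans
    simp only [natDegree_X_pow]
    exact Nat.lt_succ_iff.1 (mem_range.1 hk)
  · apply Polynomial.le_natDegree_of_ne_zero
    have : (padeP n m).coeff m = (n.choose (2 * m) : ℝ) := by
      simp only [padeP, finset_sum_coeff, coeff_C_mul, coeff_X_pow]
      rw [Finset.sum_eq_single m]
      · simp
      · intro b _ hb; simp [Ne.symm hb]
      · intro hb; exact absurd (self_mem_range_succ m) hb
    rw [this]
    exact_mod_cast (Nat.choose_pos h).ne'

lemma padeQ_natDegree (n ℓ : ℕ) (h : 2 * ℓ + 1 ≤ n) : (padeQ n ℓ).natDegree = ℓ := by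
  apply le_antisymm
  · apply Polynomial.natDegree_sum_le_of_forall_le
    intro k hk
    apply (Polynomial.natDegree_C_mul_le _ _).trans
    simp only [natDegree_X_pow]
    exact Nat.lt_succ_iff.1 (mem_range.1 hk)
  · apply Polynomial.le_natDegree_of_ne_zero
    have : (padeQ n ℓ).coeff ℓ = (n.choose (2 * ℓ + 1) : ℝ) := by
      simp only [padeQ, finset_sum_coeff, coeff_C_mul, coeff_X_pow]
      rw [Finset.sum_eq_single ℓ]
      · simp
      · intro b _ hb; simp [Ne.symm hb]
      · intro hb; exact absurd (self_mem_range_succ ℓ) hb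
    rw [this]
    exact_mod_cast (Nat.choose_pos h).ne'

lemma padeQ_pos (n ℓ : ℕ) (hn : 0 < n) {z : ℝ} (hz : 0 < z) : 0 < (padeQ n ℓ).eval z := by
  rw [padeQ_eval]
  apply Finset.sum_pos'
  · intro k _
    positivity
  · refine ⟨0, Finset.mem_range.2 (Nat.succ_pos ℓ), ?_⟩
    simp only [mul_zero, zero_add, Nat.choose_one_right, pow_zero, mul_one]
    exact_mod_cast hn

lemma sum_shrink_even {R : Type*} [CommRing R] (n m : ℕ) (hmn : m ≤ n) (hn : n ≤ 2 * m + 1)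
    (s : R) : ∑ j ∈ range (n + 1), (n.choose (2 * j) : R) * s ^ (2 * j)
      = ∑ k ∈ range (m + 1), (n.choose (2 * k) : R) * (s ^ 2) ^ k := by
  rw [← Finset.sum_subset (Finset.range_subset_range.2 (by omega : m + 1 ≤ n + 1))]
  · refine Finset.sum_congr rfl fun j _ => ?_
    rw [← pow_mul, mul_comm 2 j]
  · intro k _ hk
    rw [Nat.choose_eq_zero_of_lt (by simp only [mem_range] at hk ⊢; omega)]
    simp

lemma sum_shrink_odd {R : Type*} [CommRing R] (n ℓ : ℕ) (hln : ℓ ≤ n) (hn : n ≤ 2 * ℓ + 2)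
    (s : R) : ∑ j ∈ range (n + 1), (n.choose (2 * j + 1) : R) * (s ^ 2) ^ j
      = ∑ k ∈ range (ℓ + 1), (n.choose (2 * k + 1) : R) * (s ^ 2) ^ k := by
  rw [← Finset.sum_subset (Finset.range_subset_range.2 (by omega : ℓ + 1 ≤ n + 1))]
  intro k _ hk
  rw [Nat.choose_eq_zero_of_lt (by simp only [mem_range] at hk ⊢; omega)]
  simp

lemma one_add_tan_mul_I (θ : ℝ) (hc : Real.cos θ ≠ 0) :
    (1 : ℂ) + (Real.tan θ : ℂ) * Complex.I = ((Real.cos θ : ℂ))⁻¹ * Complex.exp (θ * Complex.I) := by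
  have hc' : (Real.cos θ : ℂ) ≠ 0 := Complex.ofReal_ne_zero.2 hc
  rw [Complex.exp_mul_I, ← Complex.ofReal_cos, ← Complex.ofReal_sin, Real.tan_eq_sin_div_cos]
  have hc'' : Complex.cos ↑θ ≠ 0 := by rwa [← Complex.ofReal_cos]
  rw [eq_inv_mul_iff_mul_eq₀ hc']
  push_cast
  field_simp

lemma one_sub_tan_mul_I (θ : ℝ) (hc : Real.cos θ ≠ 0) :
    (1 : ℂ) - (Real.tan θ : ℂ) * Complex.I
      = ((Real.cos θ : ℂ))⁻¹ * Complex.exp (-(θ * Complex.I)) := by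
  have hc' : (Real.cos θ : ℂ) ≠ 0 := Complex.ofReal_ne_zero.2 hc
  rw [show (-(↑θ * Complex.I)) = ((-θ : ℝ) : ℂ) * Complex.I by push_cast; ring,
    Complex.exp_mul_I, ← Complex.ofReal_cos, ← Complex.ofReal_sin, Real.cos_neg, Real.sin_neg,
    Real.tan_eq_sin_div_cos]
  have hc'' : Complex.cos ↑θ ≠ 0 := by rwa [← Complex.ofReal_cos]
  rw [eq_inv_mul_iff_mul_eq₀ hc']
  push_cast
  field_simp
  ring

lemma exp_pow_eq (θ : ℝ) (n j : ℕ) (hθ : (n : ℝ) * θ = j * Real.pi) :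
    Complex.exp (θ * Complex.I) ^ n = (-1 : ℂ) ^ j ∧
    Complex.exp (-(θ * Complex.I)) ^ n = (-1 : ℂ) ^ j := by
  have key : Complex.exp (θ * Complex.I) ^ n = (-1 : ℂ) ^ j := by
    rw [← Complex.exp_nat_mul,
      show ((n : ℂ) * (↑θ * Complex.I)) = (j : ℕ) * (Real.pi * Complex.I) by
        rw [← mul_assoc, ← mul_assoc, ← Complex.ofReal_natCast, ← Complex.ofReal_mul, hθ]
        push_cast; ring,
      Complex.exp_nat_mul, Complex.exp_pi_mul_I]
  refine ⟨key, ?_⟩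
  rw [← Complex.exp_nat_mul, show ((n : ℂ) * -(↑θ * Complex.I)) = -((n : ℂ) * (↑θ * Complex.I)) by
    ring, Complex.exp_neg, Complex.exp_nat_mul, key, ← inv_pow, inv_neg, inv_one]

lemma PQ_at_root (n m ℓ j : ℕ) (hmn : m ≤ n) (hln : ℓ ≤ n) (hnm : n ≤ 2 * m + 1)
    (hnl : n ≤ 2 * ℓ + 2) (θ : ℝ) (hθ1 : 0 < θ) (hθ2 : θ < Real.pi / 2)
    (hθ : (n : ℝ) * θ = j * Real.pi) :
    (padeQ n ℓ).eval (-(Real.tan θ) ^ 2) = 0 ∧ (padeP n m).eval (-(Real.tan θ) ^ 2) ≠ 0 := by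
  set t : ℝ := Real.tan θ with htdef
  have ht : 0 < t := Real.tan_pos_of_pos_of_lt_pi_div_two hθ1 hθ2
  have hc : Real.cos θ ≠ 0 := (Real.cos_pos_of_mem_Ioo ⟨by linarith, hθ2⟩).ne'
  set s : ℂ := (t : ℂ) * Complex.I with hsdef
  have hs2 : s ^ 2 = ((-(t ^ 2) : ℝ) : ℂ) := by
    rw [hsdef, mul_pow, Complex.I_sq]
    push_cast
    ring
  have hQc : (((padeQ n ℓ).eval (-(t ^ 2)) : ℝ) : ℂ)
      = ∑ k ∈ range (ℓ + 1), (n.choose (2 * k + 1) : ℂ) * ((-(t ^ 2) : ℝ) : ℂ) ^ k := by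
    rw [padeQ_eval]
    push_cast
    rfl
  have hPc : (((padeP n m).eval (-(t ^ 2)) : ℝ) : ℂ)
      = ∑ k ∈ range (m + 1), (n.choose (2 * k) : ℂ) * ((-(t ^ 2) : ℝ) : ℂ) ^ k := by
    rw [padeP_eval]
    push_cast
    rfl
  have hsub : (1 + s) ^ n - (1 - s) ^ n = 2 * s * (((padeQ n ℓ).eval (-(t ^ 2)) : ℝ) : ℂ) := by
    rw [pade_sub, sum_shrink_odd n ℓ hln hnl, hQc, hs2]
  have hadd : (1 + s) ^ n + (1 - s) ^ n = 2 * (((padeP n m).eval (-(t ^ 2)) : ℝ) : ℂ) := by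
    rw [pade_add, sum_shrink_even n m hmn hnm, hPc, hs2]
  have e1 : (1 + s) ^ n = ((Real.cos θ : ℂ))⁻¹ ^ n * (-1 : ℂ) ^ j := by
    rw [hsdef, one_add_tan_mul_I θ hc, mul_pow, (exp_pow_eq θ n j hθ).1]
  have e2 : (1 - s) ^ n = ((Real.cos θ : ℂ))⁻¹ ^ n * (-1 : ℂ) ^ j := by
    rw [hsdef, one_sub_tan_mul_I θ hc, mul_pow, (exp_pow_eq θ n j hθ).2]
  constructor
  · have h0 : 2 * s * (((padeQ n ℓ).eval (-(t ^ 2)) : ℝ) : ℂ) = 0 := by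
      rw [← hsub, e1, e2, sub_self]
    have hs0 : s ≠ 0 := by
      rw [hsdef]
      exact mul_ne_zero (Complex.ofReal_ne_zero.2 ht.ne') Complex.I_ne_zero
    have := mul_eq_zero.1 h0
    rcases this with h | h
    · exact absurd h (mul_ne_zero two_ne_zero hs0)
    · exact_mod_cast h
  · intro hP
    rw [hP] at hadd
    rw [e1, e2] at hadd
    simp only [Complex.ofReal_zero, mul_zero] at hadd
    have : ((Real.cos θ : ℂ))⁻¹ ^ n * (-1 : ℂ) ^ j ≠ 0 := by
      apply mul_ne_zero
      · exact pow_ne_zero _ (inv_ne_zero (Complex.ofReal_ne_zero.2 hc))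
      · exact pow_ne_zero _ (by norm_num)
    have h2 : ((Real.cos θ : ℂ))⁻¹ ^ n * (-1 : ℂ) ^ j = 0 := by
      have := hadd
      linear_combination (1/2 : ℂ) * this
    exact this h2

/-- The poles of the type `(m, ℓ)` Padé approximant of `√z` at `z = 1`, as a rational
function of `z`, are exactly the `ℓ` numbers `-tan²(jπ/(m+ℓ+1))`, `j = 1, …, ℓ`. -/
theorem pade_sqrt_poles (m ℓ : ℕ) (hm : 0 < m) (hℓ : ℓ = m - 1 ∨ ℓ = m) :
    ∃ p q : Polynomial ℝ, p.natDegree = m ∧ q.natDegree = ℓ ∧ IsCoprime p q ∧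
      (∀ z : ℝ, 0 < z →
        p.eval z / q.eval z =
          Real.sqrt z *
              ((1 + Real.sqrt z) ^ (m + ℓ + 1) + (1 - Real.sqrt z) ^ (m + ℓ + 1)) /
            ((1 + Real.sqrt z) ^ (m + ℓ + 1) - (1 - Real.sqrt z) ^ (m + ℓ + 1))) ∧
      (∀ x : ℝ, q.IsRoot x ↔ ∃ j ∈ Finset.Icc 1 ℓ,
        x = -(Real.tan ((j : ℝ) * Real.pi / ((m : ℝ) + ℓ + 1))) ^ 2) := by
  have hlm : ℓ ≤ m := by omega
  have hml : m ≤ ℓ + 1 := by omega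
  set n : ℕ := m + ℓ + 1 with hn
  have hmn : m ≤ n := by omega
  have hln : ℓ ≤ n := by omega
  have hnm : n ≤ 2 * m + 1 := by omega
  have hnl : n ≤ 2 * ℓ + 2 := by omega
  have h2l : 2 * ℓ < n := by omega
  have hn0 : 0 < n := by omega
  have hncast : ((n : ℝ)) = (m : ℝ) + ℓ + 1 := by rw [hn]; push_cast; ring
  set r : ℕ → ℝ := fun j => -(Real.tan ((j : ℝ) * Real.pi / ((m : ℝ) + ℓ + 1))) ^ 2 with hr
  -- the angles
  have hθprops : ∀ j ∈ Finset.Icc 1 ℓ,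
      0 < (j : ℝ) * Real.pi / ((m : ℝ) + ℓ + 1) ∧
      (j : ℝ) * Real.pi / ((m : ℝ) + ℓ + 1) < Real.pi / 2 ∧
      (n : ℝ) * ((j : ℝ) * Real.pi / ((m : ℝ) + ℓ + 1)) = (j : ℝ) * Real.pi := by
    intro j hj
    simp only [Finset.mem_Icc] at hj
    have hj1 : (1 : ℝ) ≤ (j : ℝ) := by exact_mod_cast hj.1
    have hj2 : (j : ℝ) ≤ (ℓ : ℝ) := by exact_mod_cast hj.2
    have hden : (0 : ℝ) < (m : ℝ) + ℓ + 1 := by positivity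
    have hpi := Real.pi_pos
    refine ⟨by positivity, ?_, ?_⟩
    · rw [div_lt_div_iff₀ hden (by norm_num : (0:ℝ) < 2)]
      have h2j : 2 * (j : ℝ) < (m : ℝ) + ℓ + 1 := by
        have : (2 * ℓ : ℝ) < (n : ℝ) := by exact_mod_cast h2l
        rw [hncast] at this
        nlinarith
      nlinarith
    · rw [hncast]
      field_simp
  -- roots and nonvanishing
  have hroots : ∀ j ∈ Finset.Icc 1 ℓ,
      (padeQ n ℓ).eval (r j) = 0 ∧ (padeP n m).eval (r j) ≠ 0 := by
    intro j hj
    obtain ⟨h1, h2, h3⟩ := hθprops j hj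
    exact PQ_at_root n m ℓ j hmn hln hnm hnl _ h1 h2 h3
  -- injectivity
  have hinj : Set.InjOn r (Finset.Icc 1 ℓ) := by
    have key : ∀ a ∈ Finset.Icc 1 ℓ, ∀ b ∈ Finset.Icc 1 ℓ, a < b → r b < r a := by
      intro a ha b hb h
      obtain ⟨ha1, ha2, -⟩ := hθprops a ha
      obtain ⟨hb1, hb2, -⟩ := hθprops b hb
      have hden : (0 : ℝ) < (m : ℝ) + ℓ + 1 := by positivity
      have hθab : (a : ℝ) * Real.pi / ((m : ℝ) + ℓ + 1)
          < (b : ℝ) * Real.pi / ((m : ℝ) + ℓ + 1) := by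
        rw [div_lt_div_iff₀ hden hden]
        have hcast : (a : ℝ) < b := by exact_mod_cast h
        nlinarith [mul_pos (mul_pos (sub_pos.2 hcast) Real.pi_pos) hden]
      have htan := Real.tan_lt_tan_of_nonneg_of_lt_pi_div_two ha1.le hb2 hθab
      have hta : 0 < Real.tan ((a : ℝ) * Real.pi / ((m : ℝ) + ℓ + 1)) :=
        Real.tan_pos_of_pos_of_lt_pi_div_two ha1 ha2
      simp only [hr]
      have := pow_lt_pow_left₀ htan hta.le (n := 2) (by norm_num)
      linarith
    intro a ha b hb hab
    simp only [Finset.coe_Icc, Set.mem_Icc] at ha hb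
    by_contra hne
    rcases Nat.lt_or_ge a b with h | h
    · exact absurd hab (key a (Finset.mem_Icc.2 ha) b (Finset.mem_Icc.2 hb) h).ne'
    · have : b < a := by omega
      exact absurd hab.symm (key b (Finset.mem_Icc.2 hb) a (Finset.mem_Icc.2 ha) this).ne'
  -- degree facts
  have hdegP : (padeP n m).natDegree = m := padeP_natDegree n m (by omega)
  have hdegQ : (padeQ n ℓ).natDegree = ℓ := padeQ_natDegree n ℓ (by omega)
  have hQne : padeQ n ℓ ≠ 0 := by
    intro h
    have := padeQ_pos n ℓ hn0 (by norm_num : (0:ℝ) < 1)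
    rw [h] at this
    simp at this
  -- the root finset
  set S : Finset ℝ := (Finset.Icc 1 ℓ).image r with hS
  have hcardS : S.card = ℓ := by
    rw [hS, Finset.card_image_of_injOn hinj, Nat.card_Icc]
    omega
  have hSsub : S ⊆ (padeQ n ℓ).roots.toFinset := by
    intro x hx
    rw [hS, Finset.mem_image] at hx
    obtain ⟨j, hj, rfl⟩ := hx
    rw [Multiset.mem_toFinset, Polynomial.mem_roots hQne]
    exact (hroots j hj).1
  have hcard_chain : (padeQ n ℓ).roots.toFinset.card ≤ ℓ := by
    calc (padeQ n ℓ).roots.toFinset.card ≤ Multiset.card (padeQ n ℓ).roots :=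
          Multiset.toFinset_card_le _
      _ ≤ (padeQ n ℓ).natDegree := Polynomial.card_roots' _
      _ = ℓ := hdegQ
  have hSeq : S = (padeQ n ℓ).roots.toFinset := by
    apply Finset.eq_of_subset_of_card_le hSsub
    rw [hcardS]
    exact hcard_chain
  have hcard_roots : Multiset.card (padeQ n ℓ).roots = (padeQ n ℓ).natDegree := by
    have h1 : ℓ ≤ Multiset.card (padeQ n ℓ).roots := by
      calc ℓ = S.card := hcardS.symm
        _ = (padeQ n ℓ).roots.toFinset.card := by rw [hSeq]
        _ ≤ Multiset.card (padeQ n ℓ).roots := Multiset.toFinset_card_le _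
    have h2 := Polynomial.card_roots' (padeQ n ℓ)
    omega
  -- root membership characterization
  have hroot_char : ∀ x : ℝ, (padeQ n ℓ).IsRoot x ↔ ∃ j ∈ Finset.Icc 1 ℓ, x = r j := by
    intro x
    constructor
    · intro hx
      have : x ∈ (padeQ n ℓ).roots.toFinset := by
        rw [Multiset.mem_toFinset, Polynomial.mem_roots hQne]
        exact hx
      rw [← hSeq, hS, Finset.mem_image] at this
      obtain ⟨j, hj, hjx⟩ := this
      exact ⟨j, hj, hjx.symm⟩
    · rintro ⟨j, hj, rfl⟩
      exact (hroots j hj).1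
  -- coprimality
  have hcop : IsCoprime (padeP n m) (padeQ n ℓ) := by
    rw [← EuclideanDomain.gcd_isUnit_iff]
    by_contra hg
    have hg0 : EuclideanDomain.gcd (padeP n m) (padeQ n ℓ) ≠ 0 := by
      intro h
      exact hQne (EuclideanDomain.gcd_eq_zero_iff.1 h).2
    obtain ⟨i, hi, hidvd⟩ := WfDvdMonoid.exists_irreducible_factor hg hg0
    have hiq : i ∣ padeQ n ℓ := hidvd.trans (EuclideanDomain.gcd_dvd_right _ _)
    have hip : i ∣ padeP n m := hidvd.trans (EuclideanDomain.gcd_dvd_left _ _)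
    have hfact := Polynomial.C_leadingCoeff_mul_prod_multiset_X_sub_C hcard_roots (p := padeQ n ℓ)
    rw [← hfact] at hiq
    have hprime : Prime i := hi.prime
    rcases hprime.dvd_mul.1 hiq with h | h
    · exact hi.not_isUnit (isUnit_of_dvd_unit h
        (Polynomial.isUnit_C.2 (IsUnit.mk0 _ (Polynomial.leadingCoeff_ne_zero.2 hQne))))
    · obtain ⟨f, hf, hif⟩ := hprime.exists_mem_multiset_dvd h
      obtain ⟨a, ha, rfl⟩ := Multiset.mem_map.1 hf
      have hassoc := hi.associated_of_dvd (Polynomial.irreducible_X_sub_C a) hif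
      have hXa : (Polynomial.X - Polynomial.C a) ∣ padeP n m := hassoc.symm.dvd.trans hip
      have hroot_p : (padeP n m).IsRoot a := Polynomial.dvd_iff_isRoot.1 hXa
      have haq : (padeQ n ℓ).IsRoot a := (Polynomial.mem_roots hQne).1 ha
      obtain ⟨j, hj, rfl⟩ := (hroot_char a).1 haq
      exact (hroots j hj).2 hroot_p
  -- evaluation identity
  refine ⟨padeP n m, padeQ n ℓ, hdegP, hdegQ, hcop, ?_, hroot_char⟩
  intro z hz
  set s : ℝ := Real.sqrt z with hs
  have hs0 : 0 < s := Real.sqrt_pos.2 hz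
  have hs2 : s ^ 2 = z := Real.sq_sqrt hz.le
  have hnum : (1 + s) ^ n + (1 - s) ^ n = 2 * (padeP n m).eval z := by
    rw [pade_add, sum_shrink_even n m hmn hnm, hs2, padeP_eval]
  have hden : (1 + s) ^ n - (1 - s) ^ n = 2 * s * (padeQ n ℓ).eval z := by
    rw [pade_sub, sum_shrink_odd n ℓ hln hnl, hs2, padeQ_eval]
  have hQz : 0 < (padeQ n ℓ).eval z := padeQ_pos n ℓ hn0 hz
  rw [hnum, hden]
  rw [div_eq_div_iff hQz.ne' (by positivity)]
  ring
end

section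
/- Let r̂ : (0,∞) → (0,∞) be a function and define the recursion f_{k+1}(z) = f_k(z) r̂(z / f_k(z)^2) with f_0(z) = 1, and ŝ(w) = w / r̂(w^2). If g_k(z) := sqrt(z)/f_k(z), then g_{k+1}(z) = ŝ(g_k(z)) for all k and all z > 0. In other words, the multiplicative square-root recursion for f_k is conjugate (via g = sqrt(z)/f) to iteration of the sign-function approximant ŝ. -/
/-- The multiplicative square-root recursion `f (k+1) z = f k z * r̂ (z / (f k z)^2)`,
`f 0 z = 1`, is conjugate via `g k z = √z / f k z` to iteration of the sign-function
approximant `ŝ w = w / r̂ (w^2)`. -/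
theorem sqrt_recursion_conjugate_sign (rhat : ℝ → ℝ) (hr : ∀ w, 0 < w → 0 < rhat w)
    (f : ℕ → ℝ → ℝ) (h0 : ∀ z, f 0 z = 1)
    (hrec : ∀ k z, f (k + 1) z = f k z * rhat (z / (f k z) ^ 2))
    (shat : ℝ → ℝ) (hs : ∀ w, shat w = w / rhat (w ^ 2))
    (g : ℕ → ℝ → ℝ) (hg : ∀ k z, g k z = Real.sqrt z / f k z) :
    ∀ k, ∀ z : ℝ, 0 < z → g (k + 1) z = shat (g k z) := by
  intro k z hz
  have hsq : (Real.sqrt z / f k z) ^ 2 = z / (f k z) ^ 2 := by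
    rw [div_pow, Real.sq_sqrt hz.le]
  rw [hg, hg, hs, hrec, hsq, div_div]
end

section
/- Let α ∈ (0,1) and define α_{k+1} = 2/(α_k^{1/2} + α_k^{-1/2}) with α_0 = α. Then α_k ∈ (0,1) for all k, (α_k) is strictly increasing, and 1 - α_{k+1} ≤ (1 - α_k)^2 / (2 α_k), so that α_k → 1 quadratically. -/
private lemma zolo_key (x : ℝ) (hx0 : 0 < x) (hx1 : x < 1) :
    x < 2 / (Real.sqrt x + (Real.sqrt x)⁻¹) ∧
    2 / (Real.sqrt x + (Real.sqrt x)⁻¹) < 1 ∧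
    1 - 2 / (Real.sqrt x + (Real.sqrt x)⁻¹) ≤ (1 - x) ^ 2 / (2 * x) := by
  set s := Real.sqrt x with hs
  have hs0 : 0 < s := Real.sqrt_pos.mpr hx0
  have hs2 : s ^ 2 = x := Real.sq_sqrt hx0.le
  have hs1 : s < 1 := by nlinarith
  have hx1' : (0:ℝ) < x + 1 := by linarith
  have hf : 2 / (s + s⁻¹) = 2 * s / (x + 1) := by
    rw [div_eq_div_iff (by positivity) hx1'.ne']
    field_simp
    nlinarith
  rw [hf]
  refine ⟨?_, ?_, ?_⟩
  · rw [lt_div_iff₀ hx1']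
    nlinarith [sq_nonneg (1 - s), sq_nonneg s, mul_pos hs0 (mul_pos hs0 hs0)]
  · rw [div_lt_one hx1']
    nlinarith [sq_nonneg (1 - s)]
  · have hrw : 1 - 2 * s / (x + 1) = (x + 1 - 2 * s) / (x + 1) := by
      field_simp
    rw [hrw, div_le_div_iff₀ hx1' (by linarith)]
    nlinarith [sq_nonneg (1 - s), sq_nonneg (1 + s), sq_nonneg s, mul_pos hs0 hs0]

/-- The scaling-parameter recursion of the type (1,0) Zolotarev iteration:
`α (k+1) = 2/(√(α k) + (√(α k))⁻¹)`, `α 0 = a ∈ (0,1)`.  All iterates lie in `(0,1)`,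
the sequence is strictly increasing, and `1 - α (k+1) ≤ (1 - α k)²/(2 α k)`, so that
`α k → 1` quadratically. -/
theorem zolotarev_scaling_parameter (a : ℝ) (ha : a ∈ Set.Ioo (0 : ℝ) 1)
    (α : ℕ → ℝ) (h0 : α 0 = a)
    (hrec : ∀ k, α (k + 1) = 2 / (Real.sqrt (α k) + (Real.sqrt (α k))⁻¹)) :
    (∀ k, α k ∈ Set.Ioo (0 : ℝ) 1) ∧ StrictMono α ∧
      (∀ k, 1 - α (k + 1) ≤ (1 - α k) ^ 2 / (2 * α k)) ∧
      Filter.Tendsto α Filter.atTop (nhds 1) := by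
  obtain ⟨ha0, ha1⟩ := ha
  have hmem : ∀ k, α k ∈ Set.Ioo (0 : ℝ) 1 := by
    intro k
    induction k with
    | zero => rw [h0]; exact ⟨ha0, ha1⟩
    | succ n ih =>
      obtain ⟨h1, h2, _⟩ := zolo_key (α n) ih.1 ih.2
      exact ⟨by rw [hrec]; linarith [ih.1], by rw [hrec]; exact h2⟩
  have hlt : ∀ k, α k < α (k + 1) := by
    intro k
    obtain ⟨h1, _, _⟩ := zolo_key (α k) (hmem k).1 (hmem k).2
    rw [hrec]; exact h1
  have hmono : StrictMono α := strictMono_nat_of_lt_succ hlt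
  have hineq : ∀ k, 1 - α (k + 1) ≤ (1 - α k) ^ 2 / (2 * α k) := by
    intro k
    obtain ⟨_, _, h3⟩ := zolo_key (α k) (hmem k).1 (hmem k).2
    rw [hrec]; exact h3
  refine ⟨hmem, hmono, hineq, ?_⟩
  -- convergence
  have hbdd : BddAbove (Set.range α) := ⟨1, by rintro _ ⟨k, rfl⟩; exact (hmem k).2.le⟩
  set L := ⨆ k, α k with hL
  have htend : Filter.Tendsto α Filter.atTop (nhds L) :=
    tendsto_atTop_ciSup hmono.monotone hbdd
  have hLub : ∀ k, α k ≤ L := fun k => le_ciSup hbdd k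
  have hL0 : 0 < L := lt_of_lt_of_le (hmem 0).1 (hLub 0)
  have hL1 : L ≤ 1 := ciSup_le fun k => (hmem k).2.le
  have hsL : 0 < Real.sqrt L := Real.sqrt_pos.mpr hL0
  have hcont : ContinuousAt (fun x => 2 / (Real.sqrt x + (Real.sqrt x)⁻¹)) L := by
    have h1 : ContinuousAt (fun x => Real.sqrt x + (Real.sqrt x)⁻¹) L :=
      (Real.continuous_sqrt.continuousAt).add
        ((Real.continuous_sqrt.continuousAt).inv₀ hsL.ne')
    exact continuousAt_const.div h1 (by positivity)
  have ht1 : Filter.Tendsto (fun k => α (k + 1)) Filter.atTop (nhds L) :=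
    htend.comp (Filter.tendsto_add_atTop_nat 1)
  have ht2 : Filter.Tendsto (fun k => 2 / (Real.sqrt (α k) + (Real.sqrt (α k))⁻¹))
      Filter.atTop (nhds (2 / (Real.sqrt L + (Real.sqrt L)⁻¹))) :=
    hcont.tendsto.comp htend
  have hfix : 2 / (Real.sqrt L + (Real.sqrt L)⁻¹) = L := by
    apply tendsto_nhds_unique _ ht1
    simpa only [hrec] using ht2
  have hL1' : L = 1 := by
    by_contra hne
    have hLlt : L < 1 := lt_of_le_of_ne hL1 hne
    obtain ⟨h1, _, _⟩ := zolo_key L hL0 hLlt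
    rw [hfix] at h1
    exact lt_irrefl L h1
  rw [← hL1']
  exact htend
end
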